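/- Let X_R be a random diagonal matrix in ℝ^{m×m} and X_ρ a random diagonal matrix in ℝ^{n×n}, independent of each other, with E[X_R] = e_R I, E[X_ρ] = e_ρ I, max_{i,j}|Cov((X_R)_ii,(X_R)_jj)| ≤ ε_R and max_{i,j}|Cov((X_ρ)_ii,(X_ρ)_jj)| ≤ ε_ρ. Then for any matrix R ∈ ℝ^{m×n}, ‖E[R ⊗ (X_R R X_ρ)] − E[(X_R R X_ρ) ⊗ (X_R R X_ρ)]‖₂ ≤ ‖R‖₂² ( |e_R e_ρ| · |1 − e_R e_ρ| + e_ρ² ε_R + e_R² ε_ρ + ε_R ε_ρ ). -/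

import Mathlib

open Matrix MeasureTheory ProbabilityTheory
open scoped Kronecker ENNReal

/-- Spectral norm (ℓ²-operator norm) of a real matrix. -/
noncomputable def specNorm {m n : Type*} [Fintype m] [Fintype n] [DecidableEq n]
    (M : Matrix m n ℝ) : ℝ :=
  ‖LinearMap.toContinuousLinearMap (Matrix.toEuclideanLin M)‖

/-- Entrywise expectation of a random matrix. -/
noncomputable def matExp {Ω : Type*} [MeasurableSpace Ω] (μ : Measure Ω)
    {m n : Type*} (X : Ω → Matrix m n ℝ) : Matrix m n ℝ :=
  Matrix.of fun i j => ∫ ω, X ω i j ∂μ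

/-- Covariance of two real random variables. -/
noncomputable def cov {Ω : Type*} [MeasurableSpace Ω] (μ : Measure Ω) (f g : Ω → ℝ) : ℝ :=
  (∫ ω, f ω * g ω ∂μ) - (∫ ω, f ω ∂μ) * (∫ ω, g ω ∂μ)

section AuxNorm

open scoped Matrix.Norms.L2Operator

lemma specNorm_eq_norm {m n : Type*} [Fintype m] [Fintype n] [DecidableEq n]
    (M : Matrix m n ℝ) : specNorm M = ‖M‖ := rfl

lemma specNorm_zero_of_isEmpty_left {m n : Type*} [Fintype m] [Fintype n] [DecidableEq n]
    [IsEmpty m] (M : Matrix m n ℝ) : specNorm M = 0 := by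
  have hM : M = 0 := Matrix.ext fun i j => isEmptyElim i
  rw [specNorm_eq_norm, hM, norm_zero]

lemma specNorm_zero_of_isEmpty_right {m n : Type*} [Fintype m] [Fintype n] [DecidableEq n]
    [IsEmpty n] (M : Matrix m n ℝ) : specNorm M = 0 := by
  have hM : M = 0 := Matrix.ext fun i j => isEmptyElim j
  rw [specNorm_eq_norm, hM, norm_zero]

lemma sumsq_mulVec_le {m n : Type*} [Fintype m] [Fintype n] [DecidableEq n]
    (M : Matrix m n ℝ) (x : n → ℝ) :
    ∑ i, (∑ j, M i j * x j) ^ 2 ≤ ‖M‖ ^ 2 * ∑ j, (x j) ^ 2 := by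
  have h := M.l2_opNorm_mulVec ((WithLp.equiv 2 (n → ℝ)).symm x)
  have hx : ‖(WithLp.equiv 2 (n → ℝ)).symm x‖ = Real.sqrt (∑ j, (x j) ^ 2) := by
    rw [EuclideanSpace.norm_eq]; simp [sq_abs]
  have hy : ‖(EuclideanSpace.equiv m ℝ).symm (M *ᵥ (WithLp.equiv 2 (n → ℝ)).symm x)‖
      = Real.sqrt (∑ i, (∑ j, M i j * x j) ^ 2) := by
    rw [EuclideanSpace.norm_eq]
    congr 1
    refine Finset.sum_congr rfl fun i _ => ?_
    simp [Matrix.mulVec, dotProduct, sq_abs]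
  rw [hy, hx] at h
  have h1 : (0:ℝ) ≤ ∑ i, (∑ j, M i j * x j) ^ 2 := Finset.sum_nonneg fun _ _ => sq_nonneg _
  have h2 : (0:ℝ) ≤ ∑ j, (x j) ^ 2 := Finset.sum_nonneg fun _ _ => sq_nonneg _
  have := mul_self_le_mul_self (Real.sqrt_nonneg _) h
  rw [Real.mul_self_sqrt h1] at this
  calc ∑ i, (∑ j, M i j * x j) ^ 2
      ≤ (‖M‖ * Real.sqrt (∑ j, (x j) ^ 2)) * (‖M‖ * Real.sqrt (∑ j, (x j) ^ 2)) := this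
    _ = ‖M‖ ^ 2 * ∑ j, (x j) ^ 2 := by
        rw [mul_mul_mul_comm, Real.mul_self_sqrt h2]; ring

lemma l2norm_le_of_sumsq {m n : Type*} [Fintype m] [Fintype n] [DecidableEq n]
    (M : Matrix m n ℝ) (c : ℝ) (hc : 0 ≤ c)
    (h : ∀ x : n → ℝ, ∑ i, (∑ j, M i j * x j) ^ 2 ≤ c ^ 2 * ∑ j, (x j) ^ 2) :
    ‖M‖ ≤ c := by
  rw [Matrix.l2_opNorm_def]
  refine ContinuousLinearMap.opNorm_le_bound _ hc fun v => ?_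
  have hv : (LinearEquiv.trans Matrix.toEuclideanLin LinearMap.toContinuousLinearMap M) v
      = Matrix.toEuclideanLin M v := rfl
  rw [hv, Matrix.toEuclideanLin_apply]
  set x : n → ℝ := (WithLp.equiv 2 (n → ℝ)) v with hxdef
  have hnv : ‖v‖ = Real.sqrt (∑ j, (x j) ^ 2) := by
    rw [EuclideanSpace.norm_eq]; simp [hxdef, sq_abs]
  have hL : ‖(WithLp.equiv 2 (m → ℝ)).symm (M *ᵥ x)‖
      = Real.sqrt (∑ i, (∑ j, M i j * x j) ^ 2) := by
    rw [EuclideanSpace.norm_eq]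
    congr 1
    refine Finset.sum_congr rfl fun i _ => ?_
    simp [Matrix.mulVec, dotProduct, sq_abs]
  change ‖(WithLp.equiv 2 (m → ℝ)).symm (M *ᵥ x)‖ ≤ c * ‖v‖
  rw [hL, hnv]
  calc Real.sqrt (∑ i, (∑ j, M i j * x j) ^ 2)
      ≤ Real.sqrt (c ^ 2 * ∑ j, (x j) ^ 2) := Real.sqrt_le_sqrt (h x)
    _ = c * Real.sqrt (∑ j, (x j) ^ 2) := by
        rw [Real.sqrt_mul (sq_nonneg c), Real.sqrt_sq hc]

lemma l2norm_diagonal_le {n : Type*} [Fintype n] [DecidableEq n]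
    (d : n → ℝ) (c : ℝ) (hc : 0 ≤ c) (hd : ∀ i, |d i| ≤ c) :
    ‖Matrix.diagonal d‖ ≤ c := by
  refine l2norm_le_of_sumsq _ c hc fun x => ?_
  rw [Finset.mul_sum]
  refine Finset.sum_le_sum fun i _ => ?_
  have h1 : ∑ j, Matrix.diagonal d i j * x j = d i * x i := by
    simp [Matrix.diagonal]
  rw [h1, mul_pow]
  have h2 : d i ^ 2 ≤ c ^ 2 := by
    rw [← sq_abs]; exact pow_le_pow_left₀ (abs_nonneg _) (hd i) 2
  nlinarith [sq_nonneg (x i)]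

lemma l2norm_kronecker_le {m₁ n₁ m₂ n₂ : Type*} [Fintype m₁] [Fintype n₁] [Fintype m₂]
    [Fintype n₂] [DecidableEq n₁] [DecidableEq n₂]
    (A : Matrix m₁ n₁ ℝ) (B : Matrix m₂ n₂ ℝ) :
    ‖A ⊗ₖ B‖ ≤ ‖A‖ * ‖B‖ := by
  refine l2norm_le_of_sumsq _ _ (mul_nonneg (norm_nonneg _) (norm_nonneg _)) fun x => ?_
  set g : n₁ → m₂ → ℝ := fun j k => ∑ l, B k l * x (j, l) with hg
  have key : ∀ (i : m₁) (k : m₂), ∑ p : n₁ × n₂, (A ⊗ₖ B) (i, k) p * x p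
      = ∑ j, A i j * g j k := by
    intro i k
    rw [Fintype.sum_prod_type]
    refine Finset.sum_congr rfl fun j _ => ?_
    rw [hg, Finset.mul_sum]
    refine Finset.sum_congr rfl fun l _ => ?_
    simp [Matrix.kroneckerMap_apply]; ring
  calc ∑ p : m₁ × m₂, (∑ q : n₁ × n₂, (A ⊗ₖ B) p q * x q) ^ 2
      = ∑ i, ∑ k, (∑ j, A i j * g j k) ^ 2 := by
        rw [Fintype.sum_prod_type]
        exact Finset.sum_congr rfl fun i _ => Finset.sum_congr rfl fun k _ => by rw [key]
    _ = ∑ k, ∑ i, (∑ j, A i j * g j k) ^ 2 := Finset.sum_comm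
    _ ≤ ∑ k : m₂, ‖A‖ ^ 2 * ∑ j, (g j k) ^ 2 :=
        Finset.sum_le_sum fun k _ => sumsq_mulVec_le A fun j => g j k
    _ = ‖A‖ ^ 2 * ∑ j, ∑ k, (g j k) ^ 2 := by rw [← Finset.mul_sum, Finset.sum_comm]
    _ ≤ ‖A‖ ^ 2 * ∑ j : n₁, ‖B‖ ^ 2 * ∑ l, (x (j, l)) ^ 2 := by
        refine mul_le_mul_of_nonneg_left (Finset.sum_le_sum fun j _ => ?_) (sq_nonneg _)
        exact sumsq_mulVec_le B fun l => x (j, l)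
    _ = (‖A‖ * ‖B‖) ^ 2 * ∑ q : n₁ × n₂, (x q) ^ 2 := by
        rw [Fintype.sum_prod_type, ← Finset.mul_sum, mul_pow]; ring

end AuxNorm

open scoped Matrix.Norms.L2Operator

/-- For independent random diagonal matrices `X_R`, `X_ρ` with `E[X_R] = e_R I`,
`E[X_ρ] = e_ρ I` and covariances bounded by `ε_R`, `ε_ρ`, one has
`‖E[R ⊗ (X_R R X_ρ)] - E[(X_R R X_ρ) ⊗ (X_R R X_ρ)]‖₂ ≤
‖R‖₂² (|e_R e_ρ| |1 - e_R e_ρ| + e_ρ² ε_R + e_R² ε_ρ + ε_R ε_ρ)`. -/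
theorem stmt_11 {Ω : Type*} [MeasurableSpace Ω] (μ : Measure Ω) [IsProbabilityMeasure μ]
    (m n : ℕ) (XR : Ω → Fin m → ℝ) (Xρ : Ω → Fin n → ℝ)
    (hXR : ∀ i, MemLp (fun ω => XR ω i) 2 μ)
    (hXρ : ∀ i, MemLp (fun ω => Xρ ω i) 2 μ)
    (hIndep : IndepFun XR Xρ μ)
    (eR eρ εR ερ : ℝ)
    (hmR : ∀ i, ∫ ω, XR ω i ∂μ = eR)
    (hmρ : ∀ i, ∫ ω, Xρ ω i ∂μ = eρ)
    (hcR : ∀ i j, |cov μ (fun ω => XR ω i) (fun ω => XR ω j)| ≤ εR)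
    (hcρ : ∀ i j, |cov μ (fun ω => Xρ ω i) (fun ω => Xρ ω j)| ≤ ερ)
    (R : Matrix (Fin m) (Fin n) ℝ) :
    specNorm ((matExp μ fun ω =>
          R ⊗ₖ (Matrix.diagonal (XR ω) * R * Matrix.diagonal (Xρ ω))) -
        matExp μ fun ω =>
          (Matrix.diagonal (XR ω) * R * Matrix.diagonal (Xρ ω)) ⊗ₖ
            (Matrix.diagonal (XR ω) * R * Matrix.diagonal (Xρ ω)))
      ≤ specNorm R ^ 2 *
          (|eR * eρ| * |1 - eR * eρ| + eρ ^ 2 * εR + eR ^ 2 * ερ + εR * ερ) := by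
  classical
  rcases Nat.eq_zero_or_pos m with hm | hm
  · subst hm
    rw [specNorm_zero_of_isEmpty_left, specNorm_zero_of_isEmpty_left]
    norm_num
  rcases Nat.eq_zero_or_pos n with hn | hn
  · subst hn
    rw [specNorm_zero_of_isEmpty_right, specNorm_zero_of_isEmpty_right]
    norm_num
  -- nonempty case
  have i0 : Fin m := ⟨0, hm⟩
  have j0 : Fin n := ⟨0, hn⟩
  have hεR : 0 ≤ εR := le_trans (abs_nonneg _) (hcR i0 i0)
  have hερ : 0 ≤ ερ := le_trans (abs_nonneg _) (hcρ j0 j0)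
  set cR' : Fin m × Fin m → ℝ :=
    fun p => cov μ (fun ω => XR ω p.1) (fun ω => XR ω p.2) with hcR'def
  set cρ' : Fin n × Fin n → ℝ :=
    fun p => cov μ (fun ω => Xρ ω p.1) (fun ω => Xρ ω p.2) with hcρ'def
  set K : Matrix (Fin m × Fin m) (Fin n × Fin n) ℝ := R ⊗ₖ R with hKdef
  -- integrability
  have hXRint : ∀ i, Integrable (fun ω => XR ω i) μ := fun i => (hXR i).integrable one_le_two
  have hXρint : ∀ i, Integrable (fun ω => Xρ ω i) μ := fun i => (hXρ i).integrable one_le_two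
  have h111 : (1 : ℝ≥0∞) / 1 = 1 / 2 + 1 / 2 := by
    rw [ENNReal.add_halves, div_one]
  have hXRmul : ∀ i k, Integrable (fun ω => XR ω i * XR ω k) μ := by
    intro i k
    have := ((hXR k).smul (r := 1) (hXR i)).integrable le_rfl
    exact this
  have hXρmul : ∀ i k, Integrable (fun ω => Xρ ω i * Xρ ω k) μ := by
    intro i k
    have := ((hXρ k).smul (r := 1) (hXρ i)).integrable le_rfl
    exact this
  -- product means
  have hmulR : ∀ i k, ∫ ω, XR ω i * XR ω k ∂μ = eR ^ 2 + cR' (i, k) := by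
    intro i k
    have : cR' (i, k) = (∫ ω, XR ω i * XR ω k ∂μ) - eR * eR := by
      simp [hcR'def, cov, hmR i, hmR k]
    rw [this]; ring
  have hmulρ : ∀ j l, ∫ ω, Xρ ω j * Xρ ω l ∂μ = eρ ^ 2 + cρ' (j, l) := by
    intro j l
    have : cρ' (j, l) = (∫ ω, Xρ ω j * Xρ ω l ∂μ) - eρ * eρ := by
      simp [hcρ'def, cov, hmρ j, hmρ l]
    rw [this]; ring
  -- independence consequences
  have hInd1 : ∀ (k : Fin m) (l : Fin n), ∫ ω, XR ω k * Xρ ω l ∂μ = eR * eρ := by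
    intro k l
    have h' : (∫ ω, XR ω k * Xρ ω l ∂μ) = (∫ ω, XR ω k ∂μ) * ∫ ω, Xρ ω l ∂μ :=
      (hIndep.comp (measurable_pi_apply k) (measurable_pi_apply l)).integral_mul_eq_mul_integral
        (hXRint k).aestronglyMeasurable (hXρint l).aestronglyMeasurable
    rw [h', hmR k, hmρ l]
  have hInd2 : ∀ (i k : Fin m) (j l : Fin n),
      ∫ ω, (XR ω i * XR ω k) * (Xρ ω j * Xρ ω l) ∂μ
        = (eR ^ 2 + cR' (i, k)) * (eρ ^ 2 + cρ' (j, l)) := by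
    intro i k j l
    have h' : (∫ ω, (XR ω i * XR ω k) * (Xρ ω j * Xρ ω l) ∂μ)
        = (∫ ω, XR ω i * XR ω k ∂μ) * ∫ ω, Xρ ω j * Xρ ω l ∂μ :=
      (hIndep.comp ((measurable_pi_apply i).mul (measurable_pi_apply k))
        ((measurable_pi_apply j).mul (measurable_pi_apply l))).integral_mul_eq_mul_integral
        (hXRmul i k).aestronglyMeasurable (hXρmul j l).aestronglyMeasurable
    rw [h', hmulR i k, hmulρ j l]
  -- the matrix identity
  have hmat : (matExp μ fun ω =>
          R ⊗ₖ (Matrix.diagonal (XR ω) * R * Matrix.diagonal (Xρ ω))) -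
        (matExp μ fun ω =>
          (Matrix.diagonal (XR ω) * R * Matrix.diagonal (Xρ ω)) ⊗ₖ
            (Matrix.diagonal (XR ω) * R * Matrix.diagonal (Xρ ω)))
      = (eR * eρ * (1 - eR * eρ)) • K - (eρ ^ 2) • (Matrix.diagonal cR' * K)
          - (eR ^ 2) • (K * Matrix.diagonal cρ')
          - Matrix.diagonal cR' * K * Matrix.diagonal cρ' := by
    ext ⟨i, k⟩ ⟨j, l⟩
    have e1 : ∫ ω, (R ⊗ₖ (Matrix.diagonal (XR ω) * R * Matrix.diagonal (Xρ ω))) (i, k) (j, l) ∂μ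
        = R i j * R k l * (eR * eρ) := by
      have hfun : (fun ω => (R ⊗ₖ (Matrix.diagonal (XR ω) * R * Matrix.diagonal (Xρ ω))) (i, k) (j, l))
          = fun ω => (R i j * R k l) * (XR ω k * Xρ ω l) := by
        funext ω
        simp [Matrix.kroneckerMap_apply, Matrix.mul_diagonal, Matrix.diagonal_mul]
        ring
      rw [hfun, integral_const_mul, hInd1 k l]
    have e2 : ∫ ω, ((Matrix.diagonal (XR ω) * R * Matrix.diagonal (Xρ ω)) ⊗ₖ
            (Matrix.diagonal (XR ω) * R * Matrix.diagonal (Xρ ω))) (i, k) (j, l) ∂μ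
        = R i j * R k l * ((eR ^ 2 + cR' (i, k)) * (eρ ^ 2 + cρ' (j, l))) := by
      have hfun : (fun ω => ((Matrix.diagonal (XR ω) * R * Matrix.diagonal (Xρ ω)) ⊗ₖ
            (Matrix.diagonal (XR ω) * R * Matrix.diagonal (Xρ ω))) (i, k) (j, l))
          = fun ω => (R i j * R k l) * ((XR ω i * XR ω k) * (Xρ ω j * Xρ ω l)) := by
        funext ω
        simp [Matrix.kroneckerMap_apply, Matrix.mul_diagonal, Matrix.diagonal_mul]
        ring
      rw [hfun, integral_const_mul, hInd2 i k j l]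
    simp only [Matrix.sub_apply, matExp, Matrix.of_apply]
    rw [e1, e2]
    simp only [Matrix.sub_apply, Matrix.smul_apply, Matrix.mul_diagonal, Matrix.diagonal_mul,
      hKdef, Matrix.kroneckerMap_apply, smul_eq_mul]
    ring
  rw [specNorm_eq_norm, specNorm_eq_norm, hmat]
  -- norm bounds
  have hK : ‖K‖ ≤ ‖R‖ * ‖R‖ := l2norm_kronecker_le R R
  have hKnn : (0:ℝ) ≤ ‖K‖ := norm_nonneg _
  have hRnn : (0:ℝ) ≤ ‖R‖ := norm_nonneg _
  have hD1 : ‖Matrix.diagonal cR'‖ ≤ εR := l2norm_diagonal_le _ _ hεR fun p => hcR p.1 p.2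
  have hD2 : ‖Matrix.diagonal cρ'‖ ≤ ερ := l2norm_diagonal_le _ _ hερ fun p => hcρ p.1 p.2
  have hD1K : ‖Matrix.diagonal cR' * K‖ ≤ εR * (‖R‖ * ‖R‖) :=
    le_trans (Matrix.l2_opNorm_mul _ _)
      (mul_le_mul hD1 hK hKnn hεR)
  have hKD2 : ‖K * Matrix.diagonal cρ'‖ ≤ (‖R‖ * ‖R‖) * ερ :=
    le_trans (Matrix.l2_opNorm_mul _ _)
      (mul_le_mul hK hD2 (norm_nonneg _) (mul_nonneg hRnn hRnn))
  have hD1KD2 : ‖Matrix.diagonal cR' * K * Matrix.diagonal cρ'‖ ≤ εR * (‖R‖ * ‖R‖) * ερ :=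
    le_trans (Matrix.l2_opNorm_mul _ _)
      (mul_le_mul hD1K hD2 (norm_nonneg _) (mul_nonneg hεR (mul_nonneg hRnn hRnn)))
  have tri : ‖(eR * eρ * (1 - eR * eρ)) • K - (eρ ^ 2) • (Matrix.diagonal cR' * K)
          - (eR ^ 2) • (K * Matrix.diagonal cρ')
          - Matrix.diagonal cR' * K * Matrix.diagonal cρ'‖
      ≤ ‖(eR * eρ * (1 - eR * eρ)) • K‖ + ‖(eρ ^ 2) • (Matrix.diagonal cR' * K)‖
        + ‖(eR ^ 2) • (K * Matrix.diagonal cρ')‖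
        + ‖Matrix.diagonal cR' * K * Matrix.diagonal cρ'‖ := by
    calc ‖(eR * eρ * (1 - eR * eρ)) • K - (eρ ^ 2) • (Matrix.diagonal cR' * K)
          - (eR ^ 2) • (K * Matrix.diagonal cρ')
          - Matrix.diagonal cR' * K * Matrix.diagonal cρ'‖
        ≤ ‖(eR * eρ * (1 - eR * eρ)) • K - (eρ ^ 2) • (Matrix.diagonal cR' * K)
          - (eR ^ 2) • (K * Matrix.diagonal cρ')‖
          + ‖Matrix.diagonal cR' * K * Matrix.diagonal cρ'‖ := norm_sub_le _ _
      _ ≤ (‖(eR * eρ * (1 - eR * eρ)) • K - (eρ ^ 2) • (Matrix.diagonal cR' * K)‖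
          + ‖(eR ^ 2) • (K * Matrix.diagonal cρ')‖)
          + ‖Matrix.diagonal cR' * K * Matrix.diagonal cρ'‖ := by
            gcongr; exact norm_sub_le _ _
      _ ≤ ((‖(eR * eρ * (1 - eR * eρ)) • K‖ + ‖(eρ ^ 2) • (Matrix.diagonal cR' * K)‖)
          + ‖(eR ^ 2) • (K * Matrix.diagonal cρ')‖)
          + ‖Matrix.diagonal cR' * K * Matrix.diagonal cρ'‖ := by
            gcongr; exact norm_sub_le _ _
      _ = _ := by ring
  refine le_trans tri ?_
  rw [norm_smul, norm_smul, norm_smul]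
  simp only [Real.norm_eq_abs, abs_pow, sq_abs]
  have habs : |eR * eρ * (1 - eR * eρ)| = |eR * eρ| * |1 - eR * eρ| := abs_mul _ _
  rw [habs]
  have h1 : |eR * eρ| * |1 - eR * eρ| * ‖K‖ ≤ |eR * eρ| * |1 - eR * eρ| * (‖R‖ * ‖R‖) := by
    have := mul_nonneg (abs_nonneg (eR * eρ)) (abs_nonneg (1 - eR * eρ))
    exact mul_le_mul_of_nonneg_left hK this
  have h2 : eρ ^ 2 * ‖Matrix.diagonal cR' * K‖ ≤ eρ ^ 2 * (εR * (‖R‖ * ‖R‖)) :=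
    mul_le_mul_of_nonneg_left hD1K (sq_nonneg _)
  have h3 : eR ^ 2 * ‖K * Matrix.diagonal cρ'‖ ≤ eR ^ 2 * ((‖R‖ * ‖R‖) * ερ) :=
    mul_le_mul_of_nonneg_left hKD2 (sq_nonneg _)
  nlinarith [h1, h2, h3, hD1KD2]
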